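/- Let G=(V,E) be a finite simple undirected graph, let x : E → ℝ≥0 satisfy ∑_{e ∈ δ(v)} x_e ≤ 1 for every vertex v ∈ V, and let A be a random subset of V whose distribution satisfies (i) Pr[v ∈ A] = ∑_{e ∈ δ(v)} x_e for every v ∈ V, and (ii) Pr[u ∈ A and v ∈ A] = Pr[u ∈ A] · Pr[v ∈ A] for every edge {u,v} ∈ E. Then there exists a matching M ⊆ E of G such that E[ |{ e ∈ M : both endpoints of e lie in A }| ] ≥ (∑_{e ∈ E} x_e)² / |V|. -/

import Mathlib

open scoped Classical
open Finset

set_option linter.unusedSectionVars false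


section Stmt0Aux

variable {V : Type} [Fintype V] [DecidableEq V]

/-- edge weight `y u * y v` -/
noncomputable def stmt0wt (y : V → ℝ) : Sym2 V → ℝ :=
  Sym2.lift ⟨fun u v => y u * y v, fun _ _ => mul_comm _ _⟩

/-- edge cost `(y u)⁻¹ + (y v)⁻¹` -/
noncomputable def stmt0t (y : V → ℝ) : Sym2 V → ℝ :=
  Sym2.lift ⟨fun u v => (y u)⁻¹ + (y v)⁻¹, fun _ _ => add_comm _ _⟩

lemma stmt0wt_mk (y : V → ℝ) (a b : V) : stmt0wt y s(a,b) = y a * y b := rfl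

lemma stmt0t_mk (y : V → ℝ) (a b : V) : stmt0t y s(a,b) = (y a)⁻¹ + (y b)⁻¹ := rfl

lemma stmt0wt_nonneg {y : V → ℝ} (hy : ∀ v, 0 ≤ y v) (e : Sym2 V) : 0 ≤ stmt0wt y e := by
  induction e using Sym2.ind with
  | _ u v => exact mul_nonneg (hy u) (hy v)

lemma stmt0t_nonneg {y : V → ℝ} (hy : ∀ v, 0 ≤ y v) (e : Sym2 V) : 0 ≤ stmt0t y e := by
  induction e using Sym2.ind with
  | _ u v => exact add_nonneg (inv_nonneg.2 (hy u)) (inv_nonneg.2 (hy v))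

lemma stmt0_merge {s m N P ν w : ℝ} (hs : 0 ≤ s) (hm : 0 ≤ m) (hN : 0 ≤ N) (hP : 0 ≤ P)
    (hν : 0 ≤ ν) (hw : 0 ≤ w) (h1 : s^2 ≤ N*P) (h2 : m^2 ≤ ν*w) :
    (s+m)^2 ≤ (N+ν)*(P+w) := by
  have h3 : (s*m)^2 ≤ (N*w)*(ν*P) := by
    calc (s*m)^2 = s^2 * m^2 := by ring
    _ ≤ (N*P)*(ν*w) := mul_le_mul h1 h2 (sq_nonneg m) (mul_nonneg hN hP)
    _ = (N*w)*(ν*P) := by ring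
  have h7 : (2*(s*m))^2 ≤ (N*w + ν*P)^2 := by
    nlinarith [h3, sq_nonneg (N*w - ν*P)]
  have h4 : 2*(s*m) ≤ N*w + ν*P :=
    (abs_le_of_sq_le_sq' h7 (add_nonneg (mul_nonneg hN hw) (mul_nonneg hν hP))).2
  nlinarith [h1, h2, h4]

section main

variable (E0 : Finset (Sym2 V)) (x : Sym2 V → ℝ) (y : V → ℝ)

/-- any single edge mass is at most the `y`-value of each endpoint -/
lemma stmt0_xley (hx : ∀ e ∈ E0, 0 ≤ x e)
    (hdeg : ∀ v, ∑ e ∈ E0.filter (fun e => v ∈ e), x e ≤ y v)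
    {e : Sym2 V} (he : e ∈ E0) {v : V} (hv : v ∈ e) : x e ≤ y v := by
  refine le_trans ?_ (hdeg v)
  exact Finset.single_le_sum (f := x)
    (fun e' he' => hx e' (mem_filter.1 he').1) (mem_filter.2 ⟨he, hv⟩)

/-- if the cost of an edge is zero, its mass is zero -/
lemma stmt0_xzero (hy : ∀ v, 0 ≤ y v) (hx : ∀ e ∈ E0, 0 ≤ x e)
    (hdeg : ∀ v, ∑ e ∈ E0.filter (fun e => v ∈ e), x e ≤ y v)
    {e : Sym2 V} (he : e ∈ E0) (ht : stmt0t y e = 0) : x e = 0 := by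
  induction e using Sym2.ind with
  | _ u v =>
    rw [stmt0t_mk] at ht
    have h1 : (y u)⁻¹ = 0 := by
      have := inv_nonneg.2 (hy u); have := inv_nonneg.2 (hy v); linarith
    have h2 : y u = 0 := inv_eq_zero.1 h1
    have h3 : x s(u,v) ≤ y u :=
      stmt0_xley E0 x y hx hdeg he (Sym2.mem_mk_left u v)
    have h4 : 0 ≤ x s(u,v) := hx _ he
    linarith

/-- per-edge bound: `x e / t e ≤ x e * (y a * y b / (y a + y b))` for an edge `e`
containing `c`, when `wt e ≤ y c * y d` (used with `{c,d} = {a,b}`). -/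
lemma stmt0_edgebound (hy : ∀ v, 0 ≤ y v) (hx : ∀ e ∈ E0, 0 ≤ x e)
    (hdeg : ∀ v, ∑ e ∈ E0.filter (fun e => v ∈ e), x e ≤ y v)
    {e : Sym2 V} (he : e ∈ E0) {c d : V} (hc : c ∈ e)
    (hwt : stmt0wt y e ≤ y c * y d) :
    x e / stmt0t y e ≤ x e * (y c * y d / (y c + y d)) := by
  rcases (hx e he).eq_or_lt with h0 | hxpos
  · rw [← h0, zero_div, zero_mul]
  have hCd : 0 ≤ y c * y d / (y c + y d) :=
    div_nonneg (mul_nonneg (hy c) (hy d)) (add_nonneg (hy c) (hy d))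
  set z := Sym2.Mem.other hc with hz
  have hsp : s(c, z) = e := Sym2.other_spec hc
  have hyc : 0 < y c := lt_of_lt_of_le hxpos (stmt0_xley E0 x y hx hdeg he hc)
  have hyz : 0 < y z :=
    lt_of_lt_of_le hxpos (stmt0_xley E0 x y hx hdeg he (Sym2.other_mem hc))
  have hwt' : y c * y z ≤ y c * y d := by rw [← hsp, stmt0wt_mk] at hwt; exact hwt
  have hzd : y z ≤ y d := le_of_mul_le_mul_left hwt' hyc
  have hyd : 0 < y d := lt_of_lt_of_le hyz hzd
  have ht : stmt0t y e = (y c)⁻¹ + (y z)⁻¹ := by rw [← hsp, stmt0t_mk]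
  rw [ht]
  have htpos : 0 < (y c)⁻¹ + (y z)⁻¹ :=
    add_pos (inv_pos.2 hyc) (inv_pos.2 hyz)
  rw [div_le_iff₀ htpos]
  have key : y c * y d / (y c + y d) * ((y c)⁻¹ + (y z)⁻¹) ≥ 1 := by
    have hcd : 0 < y c + y d := by linarith
    rw [ge_iff_le, inv_add_inv (ne_of_gt hyc) (ne_of_gt hyz), div_mul_div_comm,
      le_div_iff₀ (by positivity)]
    nlinarith [mul_le_mul_of_nonneg_left hzd (mul_nonneg (hy c) (hy c)),
      mul_pos hyc hyz, mul_pos hyc hyd]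
  calc x e = x e * 1 := by ring
  _ ≤ x e * (y c * y d / (y c + y d) * ((y c)⁻¹ + (y z)⁻¹)) :=
      mul_le_mul_of_nonneg_left key hxpos.le
  _ = x e * (y c * y d / (y c + y d)) * ((y c)⁻¹ + (y z)⁻¹) := by ring

/-- the per-step inequality -/
lemma stmt0_step (hy : ∀ v, 0 ≤ y v) (hx : ∀ e ∈ E0, 0 ≤ x e)
    (hdeg : ∀ v, ∑ e ∈ E0.filter (fun e => v ∈ e), x e ≤ y v)
    (K : Finset (Sym2 V)) (hKE : K ⊆ E0) (a b : V)
    (hmax : ∀ e ∈ K, stmt0wt y e ≤ y a * y b)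
    (hshare : ∀ e ∈ K, a ∈ e ∨ b ∈ e) :
    (∑ e ∈ K, x e)^2 ≤ (∑ e ∈ K, x e * stmt0t y e) * (y a * y b) := by
  have hxK : ∀ e ∈ K, 0 ≤ x e := fun e he => hx e (hKE he)
  have cauchy : (∑ e ∈ K, x e)^2
      ≤ (∑ e ∈ K, x e * stmt0t y e) * (∑ e ∈ K, x e / stmt0t y e) := by
    apply Finset.sum_sq_le_sum_mul_sum_of_sq_eq_mul
    · intro e he; exact mul_nonneg (hxK e he) (stmt0t_nonneg hy e)
    · intro e he; exact div_nonneg (hxK e he) (stmt0t_nonneg hy e)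
    · intro e he
      rcases eq_or_ne (stmt0t y e) 0 with h0 | h0
      · rw [stmt0_xzero E0 x y hy hx hdeg (hKE he) h0]; simp
      · field_simp
  refine cauchy.trans (mul_le_mul_of_nonneg_left ?_
    (Finset.sum_nonneg fun e he => mul_nonneg (hxK e he) (stmt0t_nonneg hy e)))
  -- ∑ x/t ≤ y a * y b
  set Ka := K.filter (fun e => a ∈ e) with hKa
  set Kb := K.filter (fun e => ¬ a ∈ e) with hKb
  have hsplit : ∑ e ∈ K, x e / stmt0t y e
      = ∑ e ∈ Ka, x e / stmt0t y e + ∑ e ∈ Kb, x e / stmt0t y e :=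
    (Finset.sum_filter_add_sum_filter_not K _ _).symm
  set Ca := y a * y b / (y a + y b) with hCa
  have hCa0 : 0 ≤ Ca :=
    div_nonneg (mul_nonneg (hy a) (hy b)) (add_nonneg (hy a) (hy b))
  have hA : ∑ e ∈ Ka, x e / stmt0t y e ≤ Ca * y a := by
    calc ∑ e ∈ Ka, x e / stmt0t y e ≤ ∑ e ∈ Ka, x e * Ca := by
          apply Finset.sum_le_sum
          intro e he
          have heK := (mem_filter.1 he).1
          exact stmt0_edgebound E0 x y hy hx hdeg (hKE heK) (mem_filter.1 he).2
            (hmax e heK)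
    _ = Ca * ∑ e ∈ Ka, x e := by rw [Finset.mul_sum]; exact Finset.sum_congr rfl fun _ _ => mul_comm _ _
    _ ≤ Ca * y a := by
        apply mul_le_mul_of_nonneg_left _ hCa0
        refine le_trans ?_ (hdeg a)
        apply Finset.sum_le_sum_of_subset_of_nonneg
        · intro e he
          exact mem_filter.2 ⟨hKE (mem_filter.1 he).1, (mem_filter.1 he).2⟩
        · intro e he _; exact hx e (mem_filter.1 he).1
  have hB : ∑ e ∈ Kb, x e / stmt0t y e ≤ Ca * y b := by
    calc ∑ e ∈ Kb, x e / stmt0t y e ≤ ∑ e ∈ Kb, x e * Ca := by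
          apply Finset.sum_le_sum
          intro e he
          have heK := (mem_filter.1 he).1
          have hbe : b ∈ e := by
            rcases hshare e heK with h | h
            · exact absurd h (mem_filter.1 he).2
            · exact h
          have := stmt0_edgebound E0 x y hy hx hdeg (hKE heK) hbe
            (le_of_le_of_eq (hmax e heK) (mul_comm _ _))
          calc x e / stmt0t y e ≤ x e * (y b * y a / (y b + y a)) := this
          _ = x e * Ca := by rw [hCa, mul_comm (y b) (y a), add_comm (y b) (y a)]
    _ = Ca * ∑ e ∈ Kb, x e := by rw [Finset.mul_sum]; exact Finset.sum_congr rfl fun _ _ => mul_comm _ _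
    _ ≤ Ca * y b := by
        apply mul_le_mul_of_nonneg_left _ hCa0
        refine le_trans ?_ (hdeg b)
        apply Finset.sum_le_sum_of_subset_of_nonneg
        · intro e he
          have heK := (mem_filter.1 he).1
          have hbe : b ∈ e := by
            rcases hshare e heK with h | h
            · exact absurd h (mem_filter.1 he).2
            · exact h
          exact mem_filter.2 ⟨hKE heK, hbe⟩
        · intro e he _; exact hx e (mem_filter.1 he).1
  have hfin : Ca * y a + Ca * y b ≤ y a * y b := by
    rcases (add_nonneg (hy a) (hy b)).eq_or_lt with h0 | h0
    · have hya : y a = 0 := le_antisymm (by linarith [hy b]) (hy a)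
      have hyb : y b = 0 := le_antisymm (by linarith [hy a]) (hy b)
      simp [hCa, hya, hyb]
    · have : Ca * y a + Ca * y b = Ca * (y a + y b) := by ring
      rw [this, hCa, div_mul_cancel₀ _ (ne_of_gt h0)]
  linarith [hsplit, hA, hB, hfin]

/-- the greedy induction -/
lemma stmt0_key (hy : ∀ v, 0 ≤ y v) (hx : ∀ e ∈ E0, 0 ≤ x e)
    (hdeg : ∀ v, ∑ e ∈ E0.filter (fun e => v ∈ e), x e ≤ y v) :
    ∀ A : Finset (Sym2 V), A ⊆ E0 →
      ∃ M : Finset (Sym2 V), M ⊆ A ∧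
        (∀ e ∈ M, ∀ f ∈ M, e ≠ f → ∀ v : V, v ∈ e → v ∉ f) ∧
        (∑ e ∈ A, x e)^2
          ≤ (∑ e ∈ A, x e * stmt0t y e) * (∑ e ∈ M, stmt0wt y e) := by
  intro A
  induction A using Finset.strongInduction with
  | _ A ih =>
    intro hAE
    rcases A.eq_empty_or_nonempty with rfl | hne
    · exact ⟨∅, by simp, by simp, by simp⟩
    obtain ⟨f, hfA, hfmax⟩ := Finset.exists_max_image A (stmt0wt y) hne
    obtain ⟨a, ha⟩ : ∃ a, a ∈ f := ⟨f.out.1, Sym2.out_fst_mem f⟩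
    set b := Sym2.Mem.other ha with hb
    have hab : s(a, b) = f := Sym2.other_spec ha
    set K := A.filter (fun e => a ∈ e ∨ b ∈ e) with hK
    have hfK : f ∈ K := mem_filter.2 ⟨hfA, Or.inl ha⟩
    have hKA : K ⊆ A := filter_subset _ _
    have hssub : A \ K ⊂ A := Finset.sdiff_ssubset hKA ⟨f, hfK⟩
    obtain ⟨M', hM'sub, hM'match, hM'ineq⟩ :=
      ih (A \ K) hssub ((Finset.sdiff_subset).trans hAE)
    have hM'A : ∀ e ∈ M', e ∈ A \ K := fun e he => hM'sub he
    refine ⟨insert f M', ?_, ?_, ?_⟩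
    · intro e he
      rcases mem_insert.1 he with rfl | h
      · exact hfA
      · exact (mem_sdiff.1 (hM'A e h)).1
    · intro e he g hg hne' v hve hvg
      rcases mem_insert.1 he with rfl | he' <;> rcases mem_insert.1 hg with rfl | hg'
      · exact hne' rfl
      · -- e = f, g ∈ M'
        have hgK : g ∉ K := (mem_sdiff.1 (hM'A g hg')).2
        apply hgK
        refine mem_filter.2 ⟨(mem_sdiff.1 (hM'A g hg')).1, ?_⟩
        have hve' : v ∈ s(a,b) := by rw [hab]; exact hve
        rcases Sym2.mem_iff.1 hve' with rfl | rfl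
        · exact Or.inl hvg
        · exact Or.inr hvg
      · -- e ∈ M', g = f
        have heK : e ∉ K := (mem_sdiff.1 (hM'A e he')).2
        apply heK
        refine mem_filter.2 ⟨(mem_sdiff.1 (hM'A e he')).1, ?_⟩
        have hvg' : v ∈ s(a,b) := by rw [hab]; exact hvg
        rcases Sym2.mem_iff.1 hvg' with rfl | rfl
        · exact Or.inl hve
        · exact Or.inr hve
      · exact hM'match e he' g hg' hne' v hve hvg
    · -- the inequality
      have hfM' : f ∉ M' := fun h => (mem_sdiff.1 (hM'A f h)).2 hfK
      rw [Finset.sum_insert hfM']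
      have hx1 : ∑ e ∈ A \ K, x e + ∑ e ∈ K, x e = ∑ e ∈ A, x e :=
        Finset.sum_sdiff hKA
      have hx2 : ∑ e ∈ A \ K, x e * stmt0t y e + ∑ e ∈ K, x e * stmt0t y e
          = ∑ e ∈ A, x e * stmt0t y e := Finset.sum_sdiff hKA
      have hwtf : stmt0wt y f = y a * y b := by rw [← hab, stmt0wt_mk]
      have hstep : (∑ e ∈ K, x e)^2
          ≤ (∑ e ∈ K, x e * stmt0t y e) * (y a * y b) := by
        apply stmt0_step E0 x y hy hx hdeg K (hKA.trans hAE) a b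
        · intro e he
          exact le_of_le_of_eq (hfmax e (hKA he)) hwtf
        · intro e he; exact (mem_filter.1 he).2
      have hs : 0 ≤ ∑ e ∈ A \ K, x e :=
        Finset.sum_nonneg fun e he => hx e (hAE (mem_sdiff.1 he).1)
      have hm : 0 ≤ ∑ e ∈ K, x e :=
        Finset.sum_nonneg fun e he => hx e (hAE (hKA he))
      have hN : 0 ≤ ∑ e ∈ A \ K, x e * stmt0t y e :=
        Finset.sum_nonneg fun e he =>
          mul_nonneg (hx e (hAE (mem_sdiff.1 he).1)) (stmt0t_nonneg hy e)
      have hν : 0 ≤ ∑ e ∈ K, x e * stmt0t y e :=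
        Finset.sum_nonneg fun e he =>
          mul_nonneg (hx e (hAE (hKA he))) (stmt0t_nonneg hy e)
      have hP : 0 ≤ ∑ e ∈ M', stmt0wt y e :=
        Finset.sum_nonneg fun e _ => stmt0wt_nonneg hy e
      have hw : 0 ≤ y a * y b := mul_nonneg (hy a) (hy b)
      have := stmt0_merge hs hm hN hP hν hw hM'ineq hstep
      rw [hx1, hx2] at this
      calc (∑ e ∈ A, x e)^2
          ≤ (∑ e ∈ A, x e * stmt0t y e) * (∑ e ∈ M', stmt0wt y e + y a * y b) := by
            rw [mul_add]; linarith [this]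
      _ = (∑ e ∈ A, x e * stmt0t y e) * (stmt0wt y f + ∑ e ∈ M', stmt0wt y e) := by
            rw [hwtf]; ring

end main
end Stmt0Aux


/-- Given a finite simple graph `G = (V,E)`, a fractional edge weight
`x : E → ℝ≥0` with `x(δ(v)) ≤ 1` for all `v`, and a random subset `A` of `V`
(modeled by a probability mass function `p` on `Finset V`) with
`Pr[v ∈ A] = x(δ(v))` for every vertex and `Pr[u ∈ A ∧ v ∈ A] = Pr[u ∈ A]·Pr[v ∈ A]`
for every edge `{u,v}`, there exists a matching `M ⊆ E` such that the expected number
of edges of `M` with both endpoints in `A` is at least `x(E)² / |V|`. -/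
theorem stmt_0 {V : Type} [Fintype V] [DecidableEq V]
    (G : SimpleGraph V) [DecidableRel G.Adj]
    (x : Sym2 V → ℝ) (hx : ∀ e ∈ G.edgeFinset, 0 ≤ x e)
    (hdeg : ∀ v : V, ∑ e ∈ G.edgeFinset.filter (fun e => v ∈ e), x e ≤ 1)
    (p : Finset V → ℝ) (hp0 : ∀ S : Finset V, 0 ≤ p S)
    (hp1 : ∑ S : Finset V, p S = 1)
    (hmarg : ∀ v : V,
      ∑ S ∈ (Finset.univ : Finset (Finset V)).filter (fun S => v ∈ S), p S
        = ∑ e ∈ G.edgeFinset.filter (fun e => v ∈ e), x e)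
    (hind : ∀ u v : V, G.Adj u v →
      ∑ S ∈ (Finset.univ : Finset (Finset V)).filter (fun S => u ∈ S ∧ v ∈ S), p S
        = (∑ S ∈ (Finset.univ : Finset (Finset V)).filter (fun S => u ∈ S), p S)
          * (∑ S ∈ (Finset.univ : Finset (Finset V)).filter (fun S => v ∈ S), p S)) :
    ∃ M : Finset (Sym2 V), M ⊆ G.edgeFinset ∧
      (∀ e ∈ M, ∀ f ∈ M, e ≠ f → ∀ v : V, v ∈ e → v ∉ f) ∧
      (∑ e ∈ G.edgeFinset, x e) ^ 2 / (Fintype.card V : ℝ)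
        ≤ ∑ S : Finset V, p S * ((M.filter (fun e => ∀ v ∈ e, v ∈ S)).card : ℝ) := by
  classical
  set y : V → ℝ := fun v => ∑ e ∈ G.edgeFinset.filter (fun e => v ∈ e), x e with hydef
  have hy : ∀ v, 0 ≤ y v := fun v =>
    Finset.sum_nonneg fun e he => hx e (mem_filter.1 he).1
  have hdeg' : ∀ v, ∑ e ∈ G.edgeFinset.filter (fun e => v ∈ e), x e ≤ y v :=
    fun v => le_refl _
  obtain ⟨M, hMsub, hMmatch, hMineq⟩ :=
    stmt0_key G.edgeFinset x y hy hx hdeg' G.edgeFinset (subset_refl _)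
  refine ⟨M, hMsub, hMmatch, ?_⟩
  -- Step 1: the expectation equals the weight of the matching
  have hRHS : ∑ S : Finset V, p S * ((M.filter (fun e => ∀ v ∈ e, v ∈ S)).card : ℝ)
      = ∑ e ∈ M, stmt0wt y e := by
    have h1 : ∀ S : Finset V, p S * ((M.filter (fun e => ∀ v ∈ e, v ∈ S)).card : ℝ)
        = ∑ e ∈ M, (if (∀ v ∈ e, v ∈ S) then p S else 0) := by
      intro S
      rw [← Finset.sum_filter, Finset.sum_const, nsmul_eq_mul, mul_comm]
    rw [Finset.sum_congr rfl fun S _ => h1 S, Finset.sum_comm]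
    apply Finset.sum_congr rfl
    intro e he
    have heE : e ∈ G.edgeFinset := hMsub he
    obtain ⟨u, hu⟩ : ∃ u, u ∈ e := ⟨e.out.1, Sym2.out_fst_mem e⟩
    set w := Sym2.Mem.other hu with hwdef
    have hsp : s(u, w) = e := Sym2.other_spec hu
    have hadj : G.Adj u w := by
      rw [← SimpleGraph.mem_edgeSet, hsp]
      exact SimpleGraph.mem_edgeFinset.1 heE
    have hcond : ∀ S : Finset V, (∀ v ∈ e, v ∈ S) ↔ (u ∈ S ∧ w ∈ S) := by
      intro S
      constructor
      · intro h; exact ⟨h u hu, h w (Sym2.other_mem hu)⟩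
      · rintro ⟨h1', h2'⟩ v hv
        rw [← hsp] at hv
        rcases Sym2.mem_iff.1 hv with rfl | rfl
        · exact h1'
        · exact h2'
    calc ∑ S : Finset V, (if (∀ v ∈ e, v ∈ S) then p S else 0)
        = ∑ S ∈ (Finset.univ : Finset (Finset V)).filter
            (fun S => u ∈ S ∧ w ∈ S), p S := by
          rw [Finset.sum_filter]
          exact Finset.sum_congr rfl fun S _ => by
            by_cases h : (∀ v ∈ e, v ∈ S)
            · rw [if_pos h, if_pos ((hcond S).1 h)]
            · rw [if_neg h, if_neg (fun hc => h ((hcond S).2 hc))]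
      _ = (∑ S ∈ (Finset.univ : Finset (Finset V)).filter (fun S => u ∈ S), p S)
          * (∑ S ∈ (Finset.univ : Finset (Finset V)).filter (fun S => w ∈ S), p S) :=
          hind u w hadj
      _ = y u * y w := by rw [hmarg u, hmarg w]
      _ = stmt0wt y e := by rw [← hsp, stmt0wt_mk]
  rw [hRHS]
  -- Step 2: total cost is at most the number of vertices
  have hNcard : ∑ e ∈ G.edgeFinset, x e * stmt0t y e ≤ (Fintype.card V : ℝ) := by
    have hper : ∀ e ∈ G.edgeFinset, x e * stmt0t y e
        = ∑ v ∈ Finset.univ.filter (fun v => v ∈ e), x e * (y v)⁻¹ := by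
      intro e he
      have hnd : ¬ e.IsDiag :=
        G.not_isDiag_of_mem_edgeSet (SimpleGraph.mem_edgeFinset.1 he)
      obtain ⟨u, hu⟩ : ∃ u, u ∈ e := ⟨e.out.1, Sym2.out_fst_mem e⟩
      set w := Sym2.Mem.other hu with hwdef
      have hsp : s(u, w) = e := Sym2.other_spec hu
      have hne : u ≠ w := by
        intro h
        apply hnd
        rw [← hsp]
        exact Sym2.mk_isDiag_iff.2 h
      have hfil : Finset.univ.filter (fun v => v ∈ e) = {u, w} := by
        ext v
        simp only [mem_filter, mem_univ, true_and, mem_insert, mem_singleton,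
          ← hsp, Sym2.mem_iff]
      rw [hfil, Finset.sum_pair hne, ← hsp, stmt0t_mk]
      ring
    rw [Finset.sum_congr rfl hper]
    have hswap : ∑ e ∈ G.edgeFinset, ∑ v ∈ Finset.univ.filter (fun v => v ∈ e),
          x e * (y v)⁻¹
        = ∑ v : V, ∑ e ∈ G.edgeFinset.filter (fun e => v ∈ e), x e * (y v)⁻¹ := by
      simp_rw [Finset.sum_filter]
      exact Finset.sum_comm
    rw [hswap]
    have hv1 : ∀ v : V, ∑ e ∈ G.edgeFinset.filter (fun e => v ∈ e), x e * (y v)⁻¹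
        ≤ 1 := by
      intro v
      rw [← Finset.sum_mul]
      rcases eq_or_ne (y v) 0 with h0 | h0
      · rw [show (∑ e ∈ G.edgeFinset.filter (fun e => v ∈ e), x e) = y v from rfl,
          h0, zero_mul]
        exact zero_le_one
      · rw [show (∑ e ∈ G.edgeFinset.filter (fun e => v ∈ e), x e) = y v from rfl,
          mul_inv_cancel₀ h0]
    calc ∑ v : V, ∑ e ∈ G.edgeFinset.filter (fun e => v ∈ e), x e * (y v)⁻¹
        ≤ ∑ _v : V, (1 : ℝ) := Finset.sum_le_sum fun v _ => hv1 v
      _ = (Fintype.card V : ℝ) := by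
          rw [Finset.sum_const, nsmul_eq_mul, mul_one, Finset.card_univ]
  have hΦ : 0 ≤ ∑ e ∈ M, stmt0wt y e :=
    Finset.sum_nonneg fun e _ => stmt0wt_nonneg hy e
  have hfin : (∑ e ∈ G.edgeFinset, x e)^2
      ≤ (Fintype.card V : ℝ) * ∑ e ∈ M, stmt0wt y e :=
    hMineq.trans (mul_le_mul_of_nonneg_right hNcard hΦ)
  rcases Nat.eq_zero_or_pos (Fintype.card V) with h0 | hpos
  · rw [h0]
    simpa using hΦ
  · rw [div_le_iff₀ (by exact_mod_cast Nat.cast_pos.2 hpos)]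
    linarith [hfin]
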